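/- If H is a normal subgroup of a ♭-separated paratopological group G that is closed in the group reflexion G♭, then the quotient G/H is Hausdorff. -/

import Mathlib

open Topology

/-- The group reflexion topology `τ♭`: the strongest group topology on `G` weaker than `τ`. -/
def flatTop (G : Type*) [Group G] (τ : TopologicalSpace G) : TopologicalSpace G :=
  sInf {t : TopologicalSpace G | τ ≤ t ∧ @IsTopologicalGroup G t _}

/-- If `H` is a normal subgroup of a ♭-separated paratopological group `G` (one whose group
reflexion is Hausdorff) and `H` is closed in the group reflexion `G♭`, then the quotient
`G/H` is Hausdorff. -/
theorem stmt_10 {G : Type*} [Group G] [τ : TopologicalSpace G] [ContinuousMul G]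
    (H : Subgroup G) [H.Normal] (hsep : @T2Space G (flatTop G τ))
    (hH : IsClosed[flatTop G τ] (H : Set G)) :
    T2Space (G ⧸ H) := by
  have hg : @IsTopologicalGroup G (flatTop G τ) _ :=
    topologicalGroup_sInf (fun t ht => ht.2)
  have hle : τ ≤ flatTop G τ := le_sInf (fun t ht => ht.1)
  have h3 : @T3Space (G ⧸ H) (@QuotientGroup.instTopologicalSpace G (flatTop G τ) _ H) :=
    @QuotientGroup.instT3Space G (flatTop G τ) _ hg H _ hH
  have h2 : @T2Space (G ⧸ H) (@QuotientGroup.instTopologicalSpace G (flatTop G τ) _ H) :=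
    @T25Space.t2Space (G ⧸ H) (@QuotientGroup.instTopologicalSpace G (flatTop G τ) _ H) (@T3Space.t25Space (G ⧸ H) (@QuotientGroup.instTopologicalSpace G (flatTop G τ) _ H) h3)
  exact t2Space_antitone (coinduced_mono hle) h2
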